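/- Let n, d ≥ 2 and let (S, A) be a partial 3-(n^d + 1, n + 1, 1)-design such that for every point P the derived structure I_P can be uniquely completed to a full 2-(n^d, n, 1)-design I'_P. Suppose P is a point, ℓ is an added line of I'_P, and Q ∈ ℓ is a simple point of I'_P. Then for every point R ∈ ℓ with R ≠ Q, every point of ℓ \ {Q, R} is joined to Q by an added line in I'_R. -/
import Mathlib


open Finset

/-- The lines of the derived structure of `(S, A)` at the point `P`: for each circle `C` of
`A` through `P`, the set `C \ {P}`. -/
def derivedLines {α : Type*} [DecidableEq α] (A : Finset (Finset α)) (P : α) :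
    Finset (Finset α) :=
  (A.filter (fun C => P ∈ C)).image (fun C => C.erase P)

/-- `B` is a completion of the derived structure of `(S, A)` at `P` to a full
2-(n^d, n, 1)-design on `S \ {P}`. -/
def IsDerivedCompletion {α : Type*} [DecidableEq α] (S : Finset α) (n : ℕ) (P : α)
    (A : Finset (Finset α)) (B : Finset (Finset α)) : Prop :=
  derivedLines A P ⊆ B ∧ (∀ L ∈ B, L ⊆ S.erase P ∧ L.card = n) ∧
    ∀ X ∈ S.erase P, ∀ Y ∈ S.erase P, X ≠ Y → ∃! L, L ∈ B ∧ X ∈ L ∧ Y ∈ L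

/-- in a partial 3-(n^d+1, n+1, 1)-design whose derived structures all admit
a unique completion I'_P, if ℓ is an added line of I'_P and Q ∈ ℓ is a simple point of
I'_P, then for every R ∈ ℓ with R ≠ Q, every point of ℓ \ {Q, R} is joined to Q by an
added line in I'_R. -/
theorem stmt_16 {α : Type*} [DecidableEq α] (n d : ℕ) (hn : 2 ≤ n) (hd : 2 ≤ d)
    (S : Finset α) (A : Finset (Finset α))
    (hS : S.card = n ^ d + 1)
    (hcircles : ∀ C ∈ A, C ⊆ S ∧ C.card = n + 1)
    (hdesign : ∀ P ∈ S, ∀ Q ∈ S, ∀ R ∈ S, P ≠ Q → P ≠ R → Q ≠ R →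
      (A.filter (fun C => P ∈ C ∧ Q ∈ C ∧ R ∈ C)).card ≤ 1)
    (I' : α → Finset (Finset α))
    (hI' : ∀ P ∈ S, IsDerivedCompletion S n P A (I' P) ∧
      ∀ B, IsDerivedCompletion S n P A B → B = I' P)
    (P : α) (hP : P ∈ S)
    (ℓ : Finset α) (hℓ : ℓ ∈ I' P) (hadd : ℓ ∉ derivedLines A P)
    (Q : α) (hQ : Q ∈ ℓ)
    (hsimple : ((I' P).filter (fun m => Q ∈ m ∧ m ∉ derivedLines A P)).card = 1) :
    ∀ R ∈ ℓ, R ≠ Q → ∀ T ∈ ℓ, T ≠ Q → T ≠ R →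
      ∃ m ∈ I' R, m ∉ derivedLines A R ∧ Q ∈ m ∧ T ∈ m := by
  have memDL : ∀ (X : α) (C : Finset α), C ∈ A → X ∈ C → C.erase X ∈ derivedLines A X := by
    intro X C hCA hXC
    simp only [derivedLines, mem_image, mem_filter]
    exact ⟨C, ⟨hCA, hXC⟩, rfl⟩
  have memDL' : ∀ (X : α) (m : Finset α), m ∈ derivedLines A X →
      ∃ C ∈ A, X ∈ C ∧ C.erase X = m := by
    intro X m hm
    simp only [derivedLines, mem_image, mem_filter] at hm
    obtain ⟨C, ⟨hCA, hXC⟩, h⟩ := hm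
    exact ⟨C, hCA, hXC, h⟩
  intro R hR hRQ T hT hTQ hTR
  obtain ⟨⟨hder_P, hlines_P, huniq_P⟩, -⟩ := hI' P hP
  obtain ⟨hℓS, hℓcard⟩ := hlines_P ℓ hℓ
  have hQS : Q ∈ S := (mem_erase.mp (hℓS hQ)).2
  have hQP : Q ≠ P := (mem_erase.mp (hℓS hQ)).1
  have hRS : R ∈ S := (mem_erase.mp (hℓS hR)).2
  have hRP : R ≠ P := (mem_erase.mp (hℓS hR)).1
  have hTS : T ∈ S := (mem_erase.mp (hℓS hT)).2
  have hTP : T ≠ P := (mem_erase.mp (hℓS hT)).1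
  have hPnℓ : P ∉ ℓ := fun h => (mem_erase.mp (hℓS h)).1 rfl
  obtain ⟨⟨hder_R, hlines_R, huniq_R⟩, -⟩ := hI' R hRS
  obtain ⟨⟨hder_Q, hlines_Q, huniq_Q⟩, -⟩ := hI' Q hQS
  -- the filter in `hsimple` is exactly {ℓ}
  have hℓfilt : ℓ ∈ (I' P).filter (fun m => Q ∈ m ∧ m ∉ derivedLines A P) :=
    mem_filter.mpr ⟨hℓ, hQ, hadd⟩
  have hfilter_eq : (I' P).filter (fun m => Q ∈ m ∧ m ∉ derivedLines A P) = {ℓ} := by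
    obtain ⟨a, ha⟩ := Finset.card_eq_one.mp hsimple
    rw [ha] at hℓfilt ⊢
    rw [mem_singleton.mp hℓfilt]
  -- the unique line of I'_R through Q and T
  obtain ⟨m, ⟨hm, hQm, hTm⟩, -⟩ :=
    huniq_R Q (mem_erase.mpr ⟨hRQ.symm, hQS⟩) T (mem_erase.mpr ⟨hTR, hTS⟩) (Ne.symm hTQ)
  refine ⟨m, hm, ?_, hQm, hTm⟩
  by_contra hmd
  obtain ⟨C, hCA, hRC, hCm⟩ := memDL' R m hmd
  have hQC : Q ∈ C := mem_of_mem_erase (hCm ▸ hQm)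
  have hTC : T ∈ C := mem_of_mem_erase (hCm ▸ hTm)
  by_cases hPC : P ∈ C
  · -- then C.erase P is a line of I'_P through Q and T, so ℓ = C.erase P, contradiction
    have hCP : C.erase P ∈ I' P := hder_P (memDL P C hCA hPC)
    obtain ⟨L, -, hLu⟩ :=
      huniq_P Q (mem_erase.mpr ⟨hQP, hQS⟩) T (mem_erase.mpr ⟨hTP, hTS⟩) (Ne.symm hTQ)
    have h1 : ℓ = L := hLu ℓ ⟨hℓ, hQ, hT⟩
    have h2 : C.erase P = L :=
      hLu (C.erase P) ⟨hCP, mem_erase.mpr ⟨hQP, hQC⟩, mem_erase.mpr ⟨hTP, hTC⟩⟩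
    exact hadd (h1 ▸ h2 ▸ memDL P C hCA hPC)
  · -- P ∉ C : work in I'_Q
    obtain ⟨μ, ⟨hμ, hPμ, hRμ⟩, hμu⟩ :=
      huniq_Q P (mem_erase.mpr ⟨Ne.symm hQP, hP⟩) R (mem_erase.mpr ⟨hRQ, hRS⟩)
        (fun h => hRP (h.symm))
    -- μ is not a derived line at Q
    have hμadd : μ ∉ derivedLines A Q := by
      intro hμd
      obtain ⟨D, hDA, hQD, hDm⟩ := memDL' Q μ hμd
      have hPD : P ∈ D := mem_of_mem_erase (hDm ▸ hPμ)
      have hRD : R ∈ D := mem_of_mem_erase (hDm ▸ hRμ)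
      obtain ⟨L, -, hLu⟩ :=
        huniq_P Q (mem_erase.mpr ⟨hQP, hQS⟩) R (mem_erase.mpr ⟨hRP, hRS⟩) (Ne.symm hRQ)
      have h1 : ℓ = L := hLu ℓ ⟨hℓ, hQ, hR⟩
      have h2 : D.erase P = L :=
        hLu (D.erase P) ⟨hder_P (memDL P D hDA hPD), mem_erase.mpr ⟨hQP, hQD⟩,
          mem_erase.mpr ⟨hRP, hRD⟩⟩
      exact hadd (h1 ▸ h2 ▸ memDL P D hDA hPD)
    -- μ ⊆ insert P (ℓ.erase Q)
    have hsub : μ ⊆ insert P (ℓ.erase Q) := by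
      intro X hX
      by_cases hXP : X = P
      · exact mem_insert.mpr (Or.inl hXP)
      · have hXSQ : X ∈ S.erase Q := (hlines_Q μ hμ).1 hX
        have hXQ : X ≠ Q := (mem_erase.mp hXSQ).1
        have hXS : X ∈ S := (mem_erase.mp hXSQ).2
        refine mem_insert.mpr (Or.inr (mem_erase.mpr ⟨hXQ, ?_⟩))
        by_contra hXℓ
        obtain ⟨m', ⟨hm', hQm', hXm'⟩, -⟩ :=
          huniq_P Q (mem_erase.mpr ⟨hQP, hQS⟩) X (mem_erase.mpr ⟨hXP, hXS⟩)
            (fun h => hXℓ (h ▸ hQ))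
        have hm'ℓ : m' ≠ ℓ := fun h => hXℓ (h ▸ hXm')
        have hm'd : m' ∈ derivedLines A P := by
          by_contra hc
          exact hm'ℓ (mem_singleton.mp (hfilter_eq ▸ mem_filter.mpr ⟨hm', hQm', hc⟩))
        obtain ⟨D, hDA, hPD, hDm'⟩ := memDL' P m' hm'd
        have hQD : Q ∈ D := mem_of_mem_erase (hDm' ▸ hQm')
        have hXD : X ∈ D := mem_of_mem_erase (hDm' ▸ hXm')
        obtain ⟨L, -, hLu⟩ :=
          huniq_Q P (mem_erase.mpr ⟨Ne.symm hQP, hP⟩) X (mem_erase.mpr ⟨hXQ, hXS⟩)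
            (fun h => hXP h.symm)
        have h1 : μ = L := hLu μ ⟨hμ, hPμ, hX⟩
        have h2 : D.erase Q = L :=
          hLu (D.erase Q) ⟨hder_Q (memDL Q D hDA hQD), mem_erase.mpr ⟨Ne.symm hQP, hPD⟩,
            mem_erase.mpr ⟨hXQ, hXD⟩⟩
        exact hμadd (h1 ▸ h2 ▸ memDL Q D hDA hQD)
    -- cardinalities force equality
    have hcard1 : (insert P (ℓ.erase Q)).card = n := by
      rw [card_insert_of_notMem (fun h => hPnℓ (mem_of_mem_erase h)),
        card_erase_of_mem hQ, hℓcard]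
      omega
    have hμeq : μ = insert P (ℓ.erase Q) :=
      eq_of_subset_of_card_le hsub (by rw [hcard1, (hlines_Q μ hμ).2])
    have hTμ : T ∈ μ := hμeq ▸ mem_insert.mpr (Or.inr (mem_erase.mpr ⟨hTQ, hT⟩))
    -- but C.erase Q is also a line of I'_Q through R and T
    obtain ⟨L, -, hLu⟩ :=
      huniq_Q R (mem_erase.mpr ⟨hRQ, hRS⟩) T (mem_erase.mpr ⟨hTQ, hTS⟩) (Ne.symm hTR)
    have h1 : μ = L := hLu μ ⟨hμ, hRμ, hTμ⟩
    have h2 : C.erase Q = L :=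
      hLu (C.erase Q) ⟨hder_Q (memDL Q C hCA hQC), mem_erase.mpr ⟨hRQ, hRC⟩,
        mem_erase.mpr ⟨hTQ, hTC⟩⟩
    have hPμ' : P ∈ C.erase Q := (h2.trans h1.symm) ▸ hPμ
    exact hPC (mem_of_mem_erase hPμ')
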